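/- Let Σ be a signed graph without positive or free loops, β a Σ-automorphism, and o an acyclic orientation of Σ with corresponding region r(o) of ℝⁿ \ B_Σ. Then β fixes o (equivalently, β maps r(o) to itself) if and only if r(o) ∩ β̂ ≠ ∅. -/

import Mathlib

open Equiv Finset

/-- A signed edge on vertex type `V`: a full edge (possibly a loop when the
endpoints agree), a half edge, or a free loop. The Bool `s` is the sign,
`true` meaning `+1` and `false` meaning `-1`. -/
inductive SEdge (V : Type*) where
  | full (i j : V) (s : Bool)
  | half (i : V) (s : Bool)
  | free

/-- A signed graph: an index type of edges together with edge data. -/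
structure SGraph (V : Type*) where
  E : Type
  edge : E → SEdge V

/-- Properness of a coloring at a single edge. -/
def properAt {V : Type*} (σ : V → ℤ) : SEdge V → Prop
  | .full i j s => σ i ≠ (if s then σ j else -σ j)
  | .half i _ => σ i ≠ 0
  | .free => False

/-- A proper signed `k`-coloring: values in `[-k,k] ∩ ℤ`, proper at every edge. -/
def Proper {V : Type*} (G : SGraph V) (k : ℕ) (σ : V → ℤ) : Prop :=
  (∀ i, |σ i| ≤ (k : ℤ)) ∧ ∀ e, properAt σ (G.edge e)

/-- The signed chromatic polynomial evaluated at `k`. -/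
noncomputable def chrom {V : Type*} (G : SGraph V) (k : ℕ) : ℕ :=
  Nat.card {σ : V → ℤ // Proper G k σ}

/-- The hyperplane (subset of `ℝⁿ`) attached to a signed edge. -/
def hypOfEdge {n : ℕ} : SEdge (Fin n) → Set (Fin n → ℝ)
  | .full i j s => {x | x i = if s then x j else -x j}
  | .half i _ => {x | x i = 0}
  | .free => Set.univ

/-- The signed graphic arrangement of `G`. -/
def arr {n : ℕ} (G : SGraph (Fin n)) : Set (Set (Fin n → ℝ)) :=
  {H | ∃ e, H = hypOfEdge (G.edge e)}

/-- The action of a signed permutation `(b, δ)` on signed edges. -/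
def actEdge {n : ℕ} (b : Equiv.Perm (Fin n)) (δ : Finset (Fin n)) :
    SEdge (Fin n) → SEdge (Fin n)
  | .full i j s => .full (b i) (b j)
      (xor s (decide (Odd ((({b i, b j} : Finset (Fin n))) ∩ δ).card)))
  | .half i s => .half (b i)
      (xor s (decide (Odd ((({b i} : Finset (Fin n))) ∩ δ).card)))
  | .free => .free

/-- `(b, δ)` is an automorphism of the signed graph `G`: it fixes the edge
multiset of `G`. -/
def IsAut {n : ℕ} (b : Equiv.Perm (Fin n)) (δ : Finset (Fin n)) (G : SGraph (Fin n)) : Prop :=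
  ∃ φ : Equiv.Perm G.E, ∀ e, G.edge (φ e) = actEdge b δ (G.edge e)

/-- The action of a signed permutation on points of `ℝⁿ` (coordinate form). -/
def actR {n : ℕ} (b : Equiv.Perm (Fin n)) (δ : Finset (Fin n)) (x : Fin n → ℝ) : Fin n → ℝ :=
  fun i => (if i ∈ δ then (-1 : ℝ) else 1) * x (b⁻¹ i)

/-- The action of a signed permutation on integer colorings. -/
def actZ {n : ℕ} (b : Equiv.Perm (Fin n)) (δ : Finset (Fin n)) (σ : Fin n → ℤ) : Fin n → ℤ :=
  fun i => (if i ∈ δ then (-1 : ℤ) else 1) * σ (b⁻¹ i)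

/-- The fixed flat `β̂` of the signed permutation `β = (b, δ)`. -/
def flatOf {n : ℕ} (b : Equiv.Perm (Fin n)) (δ : Finset (Fin n)) : Set (Fin n → ℝ) :=
  ⋂ i : Fin n, {x : Fin n → ℝ | x i = (if i ∈ δ then (-1 : ℝ) else 1) * x (b⁻¹ i)}

/-- The cycle (as a finset) of `b` containing `i`. -/
def cyc {n : ℕ} (b : Equiv.Perm (Fin n)) (i : Fin n) : Finset (Fin n) :=
  Finset.univ.filter (b.SameCycle i)

lemma mem_cyc_self {n : ℕ} (b : Equiv.Perm (Fin n)) (i : Fin n) : i ∈ cyc b i := by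
  simp [cyc, Equiv.Perm.SameCycle.refl]

/-- `|C_s ∩ δ|` is even, where `C_s` is the cycle of `i`. -/
def evenCyc {n : ℕ} (b : Equiv.Perm (Fin n)) (δ : Finset (Fin n)) (i : Fin n) : Prop :=
  Even ((cyc b i ∩ δ).card)

instance {n : ℕ} (b : Equiv.Perm (Fin n)) (δ : Finset (Fin n)) (i : Fin n) :
    Decidable (evenCyc b δ i) := by unfold evenCyc; infer_instance

/-- The minimal element of the cycle of `b` containing `i`. -/
def minCyc {n : ℕ} (b : Equiv.Perm (Fin n)) (i : Fin n) : Fin n :=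
  (cyc b i).min' ⟨i, mem_cyc_self b i⟩

lemma sameCycle_minCyc {n : ℕ} (b : Equiv.Perm (Fin n)) (i : Fin n) :
    b.SameCycle (minCyc b i) i := by
  have h : minCyc b i ∈ cyc b i := (cyc b i).min'_mem _
  simp only [cyc, Finset.mem_filter] at h
  exact h.2.symm

/-- The minimal positive `l` with `b^l(k) = i`, where `k` is the minimal
element of the cycle of `i`. -/
def pathLen {n : ℕ} (b : Equiv.Perm (Fin n)) (i : Fin n) : ℕ :=
  Nat.find (p := fun l => 0 < l ∧ (b ^ l) (minCyc b i) = i)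
    (by
      obtain ⟨l, hl, _, h⟩ := Equiv.Perm.SameCycle.exists_pow_eq b (sameCycle_minCyc b i)
      exact ⟨l, hl, h⟩)

/-- `β_(i) = |δ ∩ {b(k), b²(k), …, b^l(k) = i}|`. -/
def betaN {n : ℕ} (b : Equiv.Perm (Fin n)) (δ : Finset (Fin n)) (i : Fin n) : ℕ :=
  (((Finset.Icc 1 (pathLen b i)).image fun t => (b ^ t) (minCyc b i)) ∩ δ).card

/-- The vertex set of the quotient graph `Σ/β`: cycles of `b` having even
intersection with `δ`. -/
def QV {n : ℕ} (b : Equiv.Perm (Fin n)) (δ : Finset (Fin n)) : Type :=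
  {C : Finset (Fin n) // (∃ i, C = cyc b i) ∧ Even ((C ∩ δ).card)}

/-- The quotient vertex attached to `i ∈ [n]` whose cycle meets `δ` evenly. -/
def qv {n : ℕ} (b : Equiv.Perm (Fin n)) (δ : Finset (Fin n)) (i : Fin n)
    (h : evenCyc b δ i) : QV b δ := ⟨cyc b i, ⟨i, rfl⟩, h⟩

/-- The quotient of a signed edge by a signed permutation. -/
def quotEdge {n : ℕ} (b : Equiv.Perm (Fin n)) (δ : Finset (Fin n)) :
    SEdge (Fin n) → SEdge (QV b δ)
  | .free => .free
  | .half i s => if h : evenCyc b δ i then .half (qv b δ i h) s else .free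
  | .full i j s =>
      if _hij : b.SameCycle i j then
        if h : evenCyc b δ i then
          if i = j then .full (qv b δ i h) (qv b δ i h) s
          else .full (qv b δ i h) (qv b δ i h) false
        else .free
      else
        if hi : evenCyc b δ i then
          if hj : evenCyc b δ j then
            .full (qv b δ i hi) (qv b δ j hj)
              (xor s (decide (Odd (betaN b δ i + betaN b δ j))))
          else .half (qv b δ i hi) false
        else
          if hj : evenCyc b δ j then .half (qv b δ j hj) false else .free

/-- The quotient signed graph `Σ/β`. -/
def quotG {n : ℕ} (G : SGraph (Fin n)) (b : Equiv.Perm (Fin n)) (δ : Finset (Fin n)) :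
    SGraph (QV b δ) := ⟨G.E, fun e => quotEdge b δ (G.edge e)⟩

/-- `G` has no positive loops and no free loops. -/
def NoBadLoops {n : ℕ} (G : SGraph (Fin n)) : Prop :=
  ∀ e, (∀ i, G.edge e ≠ .full i i true) ∧ G.edge e ≠ .free

/-- The type-BC Coxeter arrangement in dimension `n`. -/
def BCn (n : ℕ) : Set (Set (Fin n → ℝ)) :=
  {H | (∃ i j : Fin n, i ≠ j ∧
      (H = {x | x i = x j} ∨ H = {x | x i = -x j})) ∨
    ∃ i : Fin n, H = {x | x i = 0}}

/-- A flat of the intersection lattice `L(BC_n)`: an intersection of a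
subcollection of the hyperplanes (the empty intersection being `ℝⁿ`). -/
def IsFlat (n : ℕ) (p : Set (Fin n → ℝ)) : Prop :=
  ∃ S ⊆ BCn n, p = ⋂₀ S

/-- The rank (codimension) of a flat. -/
noncomputable def rk (n : ℕ) (p : Set (Fin n → ℝ)) : ℕ :=
  n - Module.finrank ℝ (Submodule.span ℝ p)

/-- The complement of the signed graphic arrangement of `G`. -/
def compl {n : ℕ} (G : SGraph (Fin n)) : Set (Fin n → ℝ) :=
  {x | ∀ e, x ∉ hypOfEdge (G.edge e)}

/-- A region of the signed graphic arrangement: a connected component of the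
complement. -/
def IsRegion {n : ℕ} (G : SGraph (Fin n)) (r : Set (Fin n → ℝ)) : Prop :=
  ∃ x ∈ compl G, r = connectedComponentIn (compl G) x

section AuxRegion

open Finset

variable {n : ℕ}

/-- Sign attached to a vertex by `δ`. -/
def sgn (δ : Finset (Fin n)) (i : Fin n) : ℝ := if i ∈ δ then -1 else 1

lemma sgn_mul_self (δ : Finset (Fin n)) (i : Fin n) : sgn δ i * sgn δ i = 1 := by
  unfold sgn; split <;> norm_num

lemma actR_apply_b (b : Equiv.Perm (Fin n)) (δ : Finset (Fin n)) (x : Fin n → ℝ) (i : Fin n) :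
    actR b δ x (b i) = sgn δ (b i) * x i := by
  simp [actR, sgn]

lemma actR_add (b : Equiv.Perm (Fin n)) (δ : Finset (Fin n)) (x y : Fin n → ℝ) :
    actR b δ (x + y) = actR b δ x + actR b δ y := by
  funext i; simp only [actR, Pi.add_apply]; ring

lemma actR_smul (b : Equiv.Perm (Fin n)) (δ : Finset (Fin n)) (c : ℝ) (x : Fin n → ℝ) :
    actR b δ (c • x) = c • actR b δ x := by
  funext i; simp only [actR, Pi.smul_apply, smul_eq_mul]; ring

/-- Inverse of `actR`. -/
def invActR (b : Equiv.Perm (Fin n)) (δ : Finset (Fin n)) (x : Fin n → ℝ) : Fin n → ℝ :=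
  fun j => sgn δ (b j) * x (b j)

lemma invActR_actR (b : Equiv.Perm (Fin n)) (δ : Finset (Fin n)) (x : Fin n → ℝ) :
    invActR b δ (actR b δ x) = x := by
  funext j
  simp [invActR, actR, sgn, ← mul_assoc]
  split <;> norm_num

lemma actR_invActR (b : Equiv.Perm (Fin n)) (δ : Finset (Fin n)) (x : Fin n → ℝ) :
    actR b δ (invActR b δ x) = x := by
  funext j
  simp [invActR, actR, sgn, ← mul_assoc]
  split <;> norm_num

lemma actR_continuous (b : Equiv.Perm (Fin n)) (δ : Finset (Fin n)) :
    Continuous (actR b δ) := by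
  unfold actR
  exact continuous_pi fun i => continuous_const.mul (continuous_apply _)

lemma invActR_continuous (b : Equiv.Perm (Fin n)) (δ : Finset (Fin n)) :
    Continuous (invActR b δ) := by
  unfold invActR
  exact continuous_pi fun i => continuous_const.mul (continuous_apply _)

end AuxRegion
section AuxHyp

open Finset

variable {n : ℕ}

lemma card_pair_inter (a c : Fin n) (hac : a ≠ c) (δ : Finset (Fin n)) :
    (({a, c} : Finset (Fin n)) ∩ δ).card =
      (if a ∈ δ then 1 else 0) + (if c ∈ δ then 1 else 0) := by
  by_cases ha : a ∈ δ <;> by_cases hc : c ∈ δ <;>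
    simp [Finset.insert_inter_of_mem, Finset.insert_inter_of_notMem,
      Finset.singleton_inter_of_mem, Finset.singleton_inter_of_notMem, ha, hc, hac]

lemma card_singleton_inter (a : Fin n) (δ : Finset (Fin n)) :
    (({a} : Finset (Fin n)) ∩ δ).card = if a ∈ δ then 1 else 0 := by
  by_cases ha : a ∈ δ <;>
    simp [Finset.singleton_inter_of_mem, Finset.singleton_inter_of_notMem, ha]

lemma mem_hyp_act (b : Equiv.Perm (Fin n)) (δ : Finset (Fin n)) (ed : SEdge (Fin n))
    (h1 : ∀ i, ed ≠ .full i i true) (h2 : ∀ i, actEdge b δ ed ≠ .full i i true)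
    (x : Fin n → ℝ) :
    x ∈ hypOfEdge ed ↔ actR b δ x ∈ hypOfEdge (actEdge b δ ed) := by
  cases ed with
  | free => simp [actEdge, hypOfEdge]
  | half i s =>
      simp only [actEdge, hypOfEdge, Set.mem_setOf_eq, actR, Equiv.Perm.coe_inv, Equiv.symm_apply_apply]
      constructor
      · intro h; simp [h]
      · intro h
        rcases mul_eq_zero.1 h with h' | h'
        · split at h' <;> norm_num at h'
        · exact h'
  | full i j s =>
      by_cases hij : i = j
      · subst hij
        have hs : s = false := by
          by_contra hs
          exact h1 i (by simp [Bool.not_eq_false] at hs; simp [hs])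
        subst hs
        have hbi : b i ∉ δ := by
          intro hbi
          apply h2 (b i)
          simp [actEdge, _root_.card_singleton_inter, hbi]
        simp only [actEdge, hypOfEdge, Set.mem_setOf_eq, actR, Equiv.Perm.coe_inv, Equiv.symm_apply_apply]
        norm_num [sgn, _root_.card_singleton_inter, hbi]
      · have hbij : b i ≠ b j := fun h => hij (b.injective h)
        simp only [actEdge, hypOfEdge, Set.mem_setOf_eq, actR, Equiv.Perm.coe_inv, Equiv.symm_apply_apply,
          card_pair_inter _ _ hbij]
        by_cases hbi : b i ∈ δ <;> by_cases hbj : b j ∈ δ <;> cases s <;>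
          simp [hbi, hbj, Nat.odd_iff] <;>
          constructor <;> intro h <;> linarith
end AuxHyp
section AuxCompl

variable {n : ℕ}

lemma mem_compl_act (G : SGraph (Fin n)) (hG : NoBadLoops G)
    (b : Equiv.Perm (Fin n)) (δ : Finset (Fin n)) (φ : Equiv.Perm G.E)
    (hφ : ∀ e, G.edge (φ e) = actEdge b δ (G.edge e)) (x : Fin n → ℝ) :
    x ∈ compl G ↔ actR b δ x ∈ compl G := by
  constructor
  · intro hx e
    have he := hφ (φ⁻¹ e)
    rw [show φ (φ⁻¹ e) = e from φ.apply_symm_apply e] at he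
    rw [he]
    rw [← mem_hyp_act b δ _ (fun i => (hG (φ⁻¹ e)).1 i) (fun i => he ▸ (hG e).1 i)]
    exact hx (φ⁻¹ e)
  · intro hx e
    rw [mem_hyp_act b δ _ (fun i => (hG e).1 i)
      (fun i => (hφ e) ▸ (hG (φ e)).1 i)]
    rw [← hφ e]
    exact hx (φ e)

lemma image_component (G : SGraph (Fin n)) (hG : NoBadLoops G)
    (b : Equiv.Perm (Fin n)) (δ : Finset (Fin n)) (φ : Equiv.Perm G.E)
    (hφ : ∀ e, G.edge (φ e) = actEdge b δ (G.edge e)) (z : Fin n → ℝ) (hz : z ∈ compl G) :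
    actR b δ '' connectedComponentIn (compl G) z
      = connectedComponentIn (compl G) (actR b δ z) := by
  have hc := mem_compl_act G hG b δ φ hφ
  apply Set.Subset.antisymm
  · apply IsPreconnected.subset_connectedComponentIn
    · exact isPreconnected_connectedComponentIn.image _
        ((actR_continuous b δ).continuousOn)
    · exact ⟨z, mem_connectedComponentIn hz, rfl⟩
    · rintro - ⟨y, hy, rfl⟩
      exact (hc y).1 (connectedComponentIn_subset _ _ hy)
  · intro y hy
    refine ⟨invActR b δ y, ?_, actR_invActR b δ y⟩
    have h1 : invActR b δ '' connectedComponentIn (compl G) (actR b δ z)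
        ⊆ connectedComponentIn (compl G) z := by
      apply IsPreconnected.subset_connectedComponentIn
      · exact isPreconnected_connectedComponentIn.image _
          ((invActR_continuous b δ).continuousOn)
      · exact ⟨actR b δ z, mem_connectedComponentIn ((hc z).1 hz), invActR_actR b δ z⟩
      · rintro - ⟨w, hw, rfl⟩
        have hw' : w ∈ compl G := connectedComponentIn_subset _ _ hw
        have := (hc (invActR b δ w)).2
        rw [actR_invActR] at this
        exact this hw'
    exact h1 ⟨y, hy, rfl⟩

end AuxCompl
section AuxOrder

open Finset

variable {n : ℕ}

lemma actR_iterate (b : Equiv.Perm (Fin n)) (δ : Finset (Fin n)) (k : ℕ) (x : Fin n → ℝ)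
    (i : Fin n) :
    (actR b δ)^[k] x i
      = (∏ t ∈ Finset.range k, sgn δ ((b⁻¹ ^ t) i)) * x ((b⁻¹ ^ k) i) := by
  induction k generalizing i with
  | zero => simp
  | succ k ih =>
      rw [Function.iterate_succ_apply']
      have : actR b δ ((actR b δ)^[k] x) i = sgn δ i * ((actR b δ)^[k] x) (b⁻¹ i) := rfl
      rw [this, ih]
      have hpow : ∀ t : ℕ, (b⁻¹ ^ t) (b⁻¹ i) = (b⁻¹ ^ (t + 1)) i := by
        intro t
        rw [pow_succ]
        rfl
      rw [Finset.prod_range_succ']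
      simp only [hpow, pow_zero, Equiv.Perm.coe_one, id_eq]
      ring

lemma actR_iterate_order (b : Equiv.Perm (Fin n)) (δ : Finset (Fin n)) (x : Fin n → ℝ) :
    (actR b δ)^[2 * orderOf b] x = x := by
  have hm : b⁻¹ ^ orderOf b = 1 := by
    rw [inv_pow, pow_orderOf_eq_one, inv_one]
  have key : ∀ y : Fin n → ℝ, ∀ i,
      (actR b δ)^[orderOf b] y i = (∏ t ∈ Finset.range (orderOf b), sgn δ ((b⁻¹ ^ t) i)) * y i := by
    intro y i
    rw [actR_iterate, hm]
    rfl
  funext i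
  rw [two_mul, Function.iterate_add_apply, key, key]
  rw [← mul_assoc]
  have : (∏ t ∈ Finset.range (orderOf b), sgn δ ((b⁻¹ ^ t) i))
      * (∏ t ∈ Finset.range (orderOf b), sgn δ ((b⁻¹ ^ t) i)) = 1 := by
    rw [← Finset.prod_mul_distrib]
    refine Finset.prod_eq_one fun t _ => sgn_mul_self δ _
  rw [this, one_mul]

end AuxOrder
section AuxConvex

variable {n : ℕ}

/-- A linear functional cutting out the hyperplane of an edge. -/
def sfun : SEdge (Fin n) → (Fin n → ℝ) → ℝ
  | .full i j s => fun x => x i - (if s then x j else -x j)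
  | .half i _ => fun x => x i
  | .free => fun _ => 1

lemma sfun_zero_iff (ed : SEdge (Fin n)) (hed : ed ≠ .free) (x : Fin n → ℝ) :
    x ∈ hypOfEdge ed ↔ sfun ed x = 0 := by
  cases ed with
  | free => exact absurd rfl hed
  | half i s => simp [hypOfEdge, sfun]
  | full i j s => simp [hypOfEdge, sfun, sub_eq_zero]

lemma sfun_continuous (ed : SEdge (Fin n)) : Continuous (sfun ed) := by
  cases ed with
  | free => exact continuous_const
  | half i s => exact continuous_apply i
  | full i j s =>
      have hi : Continuous fun x : Fin n → ℝ => x i := continuous_apply i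
      have hj : Continuous fun x : Fin n → ℝ => x j := continuous_apply j
      cases s
      · exact (show Continuous fun x : Fin n → ℝ => x i - -x j from hi.sub hj.neg)
      · exact (show Continuous fun x : Fin n → ℝ => x i - x j from hi.sub hj)

lemma sfun_combo (ed : SEdge (Fin n)) (hed : ed ≠ .free) (a c : ℝ) (x y : Fin n → ℝ) :
    sfun ed (a • x + c • y) = a * sfun ed x + c * sfun ed y := by
  cases ed with
  | free => exact absurd rfl hed
  | half i s => simp [sfun]
  | full i j s =>
      cases s <;> simp [sfun] <;> ring

lemma sign_const {f : (Fin n → ℝ) → ℝ} (hf : Continuous f) {s : Set (Fin n → ℝ)}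
    (hs : IsPreconnected s) (h0 : ∀ x ∈ s, f x ≠ 0) {x y : Fin n → ℝ}
    (hx : x ∈ s) (hy : y ∈ s) : 0 < f x * f y := by
  rcases (h0 x hx).lt_or_gt with h1 | h1 <;> rcases (h0 y hy).lt_or_gt with h2 | h2
  · exact mul_pos_of_neg_of_neg h1 h2
  · exfalso
    obtain ⟨z, hz, hz0⟩ := hs.intermediate_value hx hy hf.continuousOn ⟨h1.le, h2.le⟩
    exact h0 z hz hz0
  · exfalso
    obtain ⟨z, hz, hz0⟩ := hs.intermediate_value hy hx hf.continuousOn ⟨h2.le, h1.le⟩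
    exact h0 z hz hz0
  · exact mul_pos h1 h2

lemma region_eq_sides (G : SGraph (Fin n)) (hG : NoBadLoops G) (x₀ : Fin n → ℝ)
    (hx₀ : x₀ ∈ compl G) :
    connectedComponentIn (compl G) x₀
      = {x | ∀ e, 0 < sfun (G.edge e) x * sfun (G.edge e) x₀} := by
  set S : Set (Fin n → ℝ) := {x | ∀ e, 0 < sfun (G.edge e) x * sfun (G.edge e) x₀} with hS
  have hfree : ∀ e : G.E, G.edge e ≠ .free := fun e => (hG e).2
  have hne : ∀ e, sfun (G.edge e) x₀ ≠ 0 := by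
    intro e h
    exact hx₀ e ((sfun_zero_iff _ (hfree e) x₀).2 h)
  have hconv : Convex ℝ S := by
    intro x hx y hy a c ha hc hac
    intro e
    rw [sfun_combo _ (hfree e), add_mul]
    have h1 := hx e
    have h2 := hy e
    rcases ha.lt_or_eq with ha' | ha'
    · have : 0 ≤ c * (sfun (G.edge e) y * sfun (G.edge e) x₀) := mul_nonneg hc h2.le
      nlinarith
    · have hc' : c = 1 := by linarith
      rw [← ha', hc']
      simpa using h2
  have hSsub : S ⊆ compl G := by
    intro x hx e he
    have := hx e
    rw [(sfun_zero_iff _ (hfree e) x).1 he] at this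
    simp at this
  have hx₀S : x₀ ∈ S := fun e => mul_self_pos.2 (hne e)
  apply Set.Subset.antisymm
  · intro x hx e
    refine sign_const (sfun_continuous _) isPreconnected_connectedComponentIn
      (fun y hy h => ?_) hx (mem_connectedComponentIn hx₀)
    have hyc : y ∈ compl G := connectedComponentIn_subset _ _ hy
    exact hyc e ((sfun_zero_iff _ (hfree e) y).2 h)
  · exact hconv.isPreconnected.subset_connectedComponentIn hx₀S hSsub

lemma region_convex (G : SGraph (Fin n)) (hG : NoBadLoops G) (x₀ : Fin n → ℝ)
    (hx₀ : x₀ ∈ compl G) : Convex ℝ (connectedComponentIn (compl G) x₀) := by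
  rw [region_eq_sides G hG x₀ hx₀]
  intro x hx y hy a c ha hc hac e
  rw [sfun_combo _ (hG e).2, add_mul]
  have h1 := hx e
  have h2 := hy e
  rcases ha.lt_or_eq with ha' | ha'
  · have : 0 ≤ c * (sfun (G.edge e) y * sfun (G.edge e) x₀) := mul_nonneg hc h2.le
    nlinarith
  · have hc' : c = 1 := by linarith
    rw [← ha', hc']
    simpa using h2

end AuxConvex
lemma actR_sum {n : ℕ} (b : Equiv.Perm (Fin n)) (δ : Finset (Fin n)) (s : Finset ℕ)
    (f : ℕ → (Fin n → ℝ)) :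
    actR b δ (∑ k ∈ s, f k) = ∑ k ∈ s, actR b δ (f k) := by
  funext i
  simp [actR, Finset.sum_apply, Finset.mul_sum]

lemma mem_flatOf_iff {n : ℕ} (b : Equiv.Perm (Fin n)) (δ : Finset (Fin n)) (x : Fin n → ℝ) :
    x ∈ flatOf b δ ↔ actR b δ x = x := by
  constructor
  · intro hx
    funext i
    exact (Set.mem_iInter.1 hx i).symm
  · intro hx
    refine Set.mem_iInter.2 fun i => ?_
    show x i = _
    conv_lhs => rw [← hx]
    rfl
theorem region_fixed_iff_meets_flat {n : ℕ} (G : SGraph (Fin n))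
    (hG : NoBadLoops G)
    (b : Equiv.Perm (Fin n)) (δ : Finset (Fin n)) (hb : IsAut b δ G)
    (r : Set (Fin n → ℝ)) (hr : IsRegion G r) :
    actR b δ '' r = r ↔ (r ∩ flatOf b δ).Nonempty := by
  obtain ⟨φ, hφ⟩ := hb
  obtain ⟨x₀, hx₀, rfl⟩ := hr
  constructor
  · intro hA
    set A := actR b δ with hAdef
    have hAr : ∀ x ∈ connectedComponentIn (compl G) x₀,
        A x ∈ connectedComponentIn (compl G) x₀ := fun x hx => hA ▸ ⟨x, hx, rfl⟩
    have hiter : ∀ k, A^[k] x₀ ∈ connectedComponentIn (compl G) x₀ := by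
      intro k
      induction k with
      | zero => exact mem_connectedComponentIn hx₀
      | succ k ih => rw [Function.iterate_succ_apply']; exact hAr _ ih
    set m := 2 * orderOf b with hmdef
    have hm : 0 < m := by
      have := orderOf_pos b
      omega
    set g : ℕ → (Fin n → ℝ) := fun k => ((m : ℝ)⁻¹) • A^[k] x₀ with hg
    set y := ∑ k ∈ Finset.range m, g k with hy
    have hyr : y ∈ connectedComponentIn (compl G) x₀ := by
      apply (region_convex G hG x₀ hx₀).sum_mem
      · intro k _
        positivity
      · rw [Finset.sum_const, Finset.card_range, nsmul_eq_mul]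
        field_simp
      · intro k _
        exact hiter k
    have hgm : g m = g 0 := by
      simp only [hg, Function.iterate_zero, id_eq, hmdef, hAdef]
      rw [actR_iterate_order]
    have hAy : A y = y := by
      rw [hy, hAdef, actR_sum]
      have hterm : ∀ k, actR b δ (g k) = g (k + 1) := by
        intro k
        rw [hg]
        simp only
        rw [actR_smul, ← Function.iterate_succ_apply' (actR b δ)]
      simp only [hterm]
      have h1 : ∑ k ∈ Finset.range (m + 1), g k
          = (∑ k ∈ Finset.range m, g (k + 1)) + g 0 := Finset.sum_range_succ' g m
      have h2 : ∑ k ∈ Finset.range (m + 1), g k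
          = (∑ k ∈ Finset.range m, g k) + g m := Finset.sum_range_succ g m
      rw [h2, hgm] at h1
      exact (add_right_cancel h1.symm)
    exact ⟨y, hyr, (mem_flatOf_iff b δ y).2 hAy⟩
  · rintro ⟨x, hxr, hxf⟩
    have hx : actR b δ x = x := (mem_flatOf_iff b δ x).1 hxf
    have hxc : x ∈ compl G := connectedComponentIn_subset _ _ hxr
    rw [connectedComponentIn_eq hxr, image_component G hG b δ φ hφ x hxc, hx]
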